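/- Let μ ≠ 0 be real, λ = (μ²−1)/μ, and define f : ℝ² → ℂ³ by f(x,y) = (−i√(μ²+1)·(i μ/(μ²+1)) e^{i(λ−μ)x}, (1/√(μ²+1)) cos(√(μ²+1) y) e^{iμx}, (1/√(μ²+1)) sin(√(μ²+1) y) e^{iμx}). Then f satisfies the PDE system f_xx = iλ f_x − f, f_xy = iμ f_y, f_yy = iμ f_x − f. -/

import Mathlib

open Complex

private lemma hd_exp' (a : ℂ) (x : ℝ) :
    HasDerivAt (fun t : ℝ => Complex.exp (a * t)) (a * Complex.exp (a * x)) x := by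
  have h := ((Complex.hasDerivAt_exp (a * x)).comp (x:ℂ)
    ((hasDerivAt_id (x:ℂ)).const_mul a)).comp_ofReal
  simpa [mul_comm] using h

private lemma hd_cos' (c x : ℝ) :
    HasDerivAt (fun t : ℝ => ((Real.cos (c * t) : ℝ) : ℂ))
      ((-(c * Real.sin (c * x)) : ℝ) : ℂ) x := by
  have h := (((Real.hasDerivAt_cos (c*x)).comp x
    ((hasDerivAt_id x).const_mul c))).ofReal_comp
  simpa [mul_comm] using h

private lemma hd_sin' (c x : ℝ) :
    HasDerivAt (fun t : ℝ => ((Real.sin (c * t) : ℝ) : ℂ))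
      (((c * Real.cos (c * x)) : ℝ) : ℂ) x := by
  have h := (((Real.hasDerivAt_sin (c*x)).comp x
    ((hasDerivAt_id x).const_mul c))).ofReal_comp
  simpa [mul_comm] using h

noncomputable def g1' (μ lam : ℝ) (t : ℝ) : ℂ :=
  (-Complex.I * (Real.sqrt (μ ^ 2 + 1) : ℝ)) * (Complex.I * μ / ((μ : ℂ) ^ 2 + 1)) *
    Complex.exp (Complex.I * ((lam : ℂ) - μ) * t)

noncomputable def g2' (μ : ℝ) (t u : ℝ) : ℂ :=
  (1 / (Real.sqrt (μ ^ 2 + 1) : ℝ)) * (Real.cos (Real.sqrt (μ ^ 2 + 1) * u) : ℝ) *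
    Complex.exp (Complex.I * μ * t)

noncomputable def g3' (μ : ℝ) (t u : ℝ) : ℂ :=
  (1 / (Real.sqrt (μ ^ 2 + 1) : ℝ)) * (Real.sin (Real.sqrt (μ ^ 2 + 1) * u) : ℝ) *
    Complex.exp (Complex.I * μ * t)

private lemma hd_g1 (μ lam : ℝ) (t : ℝ) :
    HasDerivAt (fun s => g1' μ lam s) (Complex.I * ((lam : ℂ) - μ) * g1' μ lam t) t := by
  have h := (hd_exp' (Complex.I * ((lam : ℂ) - μ)) t).const_mul
    ((-Complex.I * (Real.sqrt (μ ^ 2 + 1) : ℝ)) * (Complex.I * μ / ((μ : ℂ) ^ 2 + 1)))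
  have e : (-Complex.I * (Real.sqrt (μ ^ 2 + 1) : ℝ)) * (Complex.I * μ / ((μ : ℂ) ^ 2 + 1)) *
      (Complex.I * ((lam : ℂ) - μ) * Complex.exp (Complex.I * ((lam : ℂ) - μ) * t))
      = Complex.I * ((lam : ℂ) - μ) * g1' μ lam t := by unfold g1'; ring
  exact e ▸ h

private lemma hd_g2x (μ : ℝ) (t u : ℝ) :
    HasDerivAt (fun s => g2' μ s u) (Complex.I * μ * g2' μ t u) t := by
  have h := (hd_exp' (Complex.I * (μ : ℂ)) t).const_mul
    (((1:ℂ) / ((Real.sqrt (μ ^ 2 + 1) : ℝ) : ℂ)) * ((Real.cos (Real.sqrt (μ ^ 2 + 1) * u) : ℝ) : ℂ))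
  have e : ((1:ℂ) / ((Real.sqrt (μ ^ 2 + 1) : ℝ) : ℂ)) * ((Real.cos (Real.sqrt (μ ^ 2 + 1) * u) : ℝ) : ℂ) *
      (Complex.I * (μ : ℂ) * Complex.exp (Complex.I * (μ : ℂ) * t)) = Complex.I * μ * g2' μ t u := by
    unfold g2'; push_cast; ring
  exact e ▸ h

private lemma hd_g3x (μ : ℝ) (t u : ℝ) :
    HasDerivAt (fun s => g3' μ s u) (Complex.I * μ * g3' μ t u) t := by
  have h := (hd_exp' (Complex.I * (μ : ℂ)) t).const_mul
    (((1:ℂ) / ((Real.sqrt (μ ^ 2 + 1) : ℝ) : ℂ)) * ((Real.sin (Real.sqrt (μ ^ 2 + 1) * u) : ℝ) : ℂ))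
  have e : ((1:ℂ) / ((Real.sqrt (μ ^ 2 + 1) : ℝ) : ℂ)) * ((Real.sin (Real.sqrt (μ ^ 2 + 1) * u) : ℝ) : ℂ) *
      (Complex.I * (μ : ℂ) * Complex.exp (Complex.I * (μ : ℂ) * t)) = Complex.I * μ * g3' μ t u := by
    unfold g3'; push_cast; ring
  exact e ▸ h

private lemma hd_g2y (μ : ℝ) (t u : ℝ) :
    HasDerivAt (fun v => g2' μ t v)
      ((-(Real.sin (Real.sqrt (μ ^ 2 + 1) * u)) : ℝ) * Complex.exp (Complex.I * μ * t)) u := by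
  have h0 : Real.sqrt (μ ^ 2 + 1) ≠ 0 := by positivity
  have h := ((hd_cos' (Real.sqrt (μ ^ 2 + 1)) u).const_mul
    ((1:ℂ) / ((Real.sqrt (μ ^ 2 + 1) : ℝ) : ℂ))).mul_const (Complex.exp (Complex.I * μ * t))
  have e : ((1:ℂ) / ((Real.sqrt (μ ^ 2 + 1) : ℝ) : ℂ)) *
      ((-(Real.sqrt (μ ^ 2 + 1) * Real.sin (Real.sqrt (μ ^ 2 + 1) * u)) : ℝ) : ℂ) *
      Complex.exp (Complex.I * μ * t)
      = ((-(Real.sin (Real.sqrt (μ ^ 2 + 1) * u)) : ℝ) : ℂ) * Complex.exp (Complex.I * μ * t) := by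
    have h0' : ((Real.sqrt (μ ^ 2 + 1) : ℝ) : ℂ) ≠ 0 := Complex.ofReal_ne_zero.mpr h0
    push_cast
    field_simp
  exact e ▸ h

private lemma hd_g3y (μ : ℝ) (t u : ℝ) :
    HasDerivAt (fun v => g3' μ t v)
      (((Real.cos (Real.sqrt (μ ^ 2 + 1) * u)) : ℝ) * Complex.exp (Complex.I * μ * t)) u := by
  have h0 : Real.sqrt (μ ^ 2 + 1) ≠ 0 := by positivity
  have h := ((hd_sin' (Real.sqrt (μ ^ 2 + 1)) u).const_mul
    ((1:ℂ) / ((Real.sqrt (μ ^ 2 + 1) : ℝ) : ℂ))).mul_const (Complex.exp (Complex.I * μ * t))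
  have e : ((1:ℂ) / ((Real.sqrt (μ ^ 2 + 1) : ℝ) : ℂ)) *
      (((Real.sqrt (μ ^ 2 + 1) * Real.cos (Real.sqrt (μ ^ 2 + 1) * u)) : ℝ) : ℂ) *
      Complex.exp (Complex.I * μ * t)
      = (((Real.cos (Real.sqrt (μ ^ 2 + 1) * u)) : ℝ) : ℂ) * Complex.exp (Complex.I * μ * t) := by
    have h0' : ((Real.sqrt (μ ^ 2 + 1) : ℝ) : ℂ) ≠ 0 := Complex.ofReal_ne_zero.mpr h0
    push_cast
    field_simp
  exact e ▸ h

private lemma hd_nsin' (c x : ℝ) :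
    HasDerivAt (fun t : ℝ => ((-(Real.sin (c * t)) : ℝ) : ℂ))
      ((-(c * Real.cos (c * x)) : ℝ) : ℂ) x := by
  have h := ((((Real.hasDerivAt_sin (c*x)).comp x
    ((hasDerivAt_id x).const_mul c))).neg).ofReal_comp
  simpa [mul_comm] using h

theorem stmt_3 (μ : ℝ) (hμ : μ ≠ 0) (lam : ℝ) (hlam : lam = (μ ^ 2 - 1) / μ)
    (f : ℝ → ℝ → ℂ × ℂ × ℂ)
    (hf : ∀ x y, f x y =
      ((-Complex.I * (Real.sqrt (μ ^ 2 + 1) : ℝ)) * (Complex.I * μ / ((μ : ℂ) ^ 2 + 1)) *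
          Complex.exp (Complex.I * (lam - μ) * x),
       (1 / (Real.sqrt (μ ^ 2 + 1) : ℝ)) * (Real.cos (Real.sqrt (μ ^ 2 + 1) * y) : ℝ) *
          Complex.exp (Complex.I * μ * x),
       (1 / (Real.sqrt (μ ^ 2 + 1) : ℝ)) * (Real.sin (Real.sqrt (μ ^ 2 + 1) * y) : ℝ) *
          Complex.exp (Complex.I * μ * x))) :
    ∀ x y : ℝ,
      deriv (fun x' => deriv (fun x'' => f x'' y) x') x =
        (Complex.I * (lam : ℂ)) • deriv (fun x'' => f x'' y) x - f x y ∧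
      deriv (fun x' => deriv (fun y' => f x' y') y) x =
        (Complex.I * (μ : ℂ)) • deriv (fun y' => f x y') y ∧
      deriv (fun y' => deriv (fun y'' => f x y'') y') y =
        (Complex.I * (μ : ℂ)) • deriv (fun x'' => f x'' y) x - f x y := by
  intro x y
  have h0 : Real.sqrt (μ ^ 2 + 1) ≠ 0 := by positivity
  have hS : ((Real.sqrt (μ ^ 2 + 1) : ℝ) : ℂ) * ((Real.sqrt (μ ^ 2 + 1) : ℝ) : ℂ)
      = (μ : ℂ) ^ 2 + 1 := by
    have := Real.mul_self_sqrt (by positivity : (0:ℝ) ≤ μ ^ 2 + 1)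
    exact_mod_cast this
  have hlm : (lam : ℂ) * μ = (μ : ℂ) ^ 2 - 1 := by
    have : lam * μ = μ ^ 2 - 1 := by rw [hlam]; field_simp
    exact_mod_cast this
  have hfe : ∀ a b, f a b = (g1' μ lam a, g2' μ a b, g3' μ a b) := fun a b => hf a b
  have hdx : ∀ a b, deriv (fun s => f s b) a =
      (Complex.I * ((lam : ℂ) - μ) * g1' μ lam a,
       Complex.I * μ * g2' μ a b, Complex.I * μ * g3' μ a b) := by
    intro a b
    have hfun : (fun s => f s b) = fun s => (g1' μ lam s, g2' μ s b, g3' μ s b) :=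
      funext fun s => hfe s b
    rw [hfun]
    exact ((hd_g1 μ lam a).prodMk ((hd_g2x μ a b).prodMk (hd_g3x μ a b))).deriv
  have hdy : ∀ a b, deriv (fun v => f a v) b =
      (0, ((-(Real.sin (Real.sqrt (μ ^ 2 + 1) * b)) : ℝ) : ℂ) * Complex.exp (Complex.I * μ * a),
       (((Real.cos (Real.sqrt (μ ^ 2 + 1) * b)) : ℝ) : ℂ) * Complex.exp (Complex.I * μ * a)) := by
    intro a b
    have hfun : (fun v => f a v) = fun v => (g1' μ lam a, g2' μ a v, g3' μ a v) :=
      funext fun v => hfe a v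
    rw [hfun]
    exact ((hasDerivAt_const b _).prodMk ((hd_g2y μ a b).prodMk (hd_g3y μ a b))).deriv
  refine ⟨?_, ?_, ?_⟩
  · -- f_xx
    have hfun2 : (fun x' => deriv (fun x'' => f x'' y) x') =
        fun s => (Complex.I * ((lam : ℂ) - μ) * g1' μ lam s,
          Complex.I * μ * g2' μ s y, Complex.I * μ * g3' μ s y) := funext fun s => hdx s y
    rw [hfun2, hdx x y, hfe x y,
      (((hd_g1 μ lam x).const_mul (Complex.I * ((lam : ℂ) - μ))).prodMk
        (((hd_g2x μ x y).const_mul (Complex.I * (μ : ℂ))).prodMk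
          ((hd_g3x μ x y).const_mul (Complex.I * (μ : ℂ))))).deriv]
    simp only [Prod.smul_mk, Prod.mk_sub_mk, smul_eq_mul, Prod.mk.injEq]
    refine ⟨?_, ?_, ?_⟩
    · linear_combination ((((lam : ℂ) - μ) ^ 2 - (lam : ℂ) * ((lam : ℂ) - μ)) * g1' μ lam x) *
        Complex.I_sq + g1' μ lam x * hlm
    · linear_combination (((μ : ℂ) ^ 2 - (lam : ℂ) * μ) * g2' μ x y) * Complex.I_sq +
        g2' μ x y * hlm
    · linear_combination (((μ : ℂ) ^ 2 - (lam : ℂ) * μ) * g3' μ x y) * Complex.I_sq +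
        g3' μ x y * hlm
  · -- f_xy
    have hfun2 : (fun x' => deriv (fun y' => f x' y') y) =
        fun (s : ℝ) => ((0 : ℂ),
          ((-(Real.sin (Real.sqrt (μ ^ 2 + 1) * y)) : ℝ) : ℂ) * Complex.exp (Complex.I * μ * s),
          (((Real.cos (Real.sqrt (μ ^ 2 + 1) * y)) : ℝ) : ℂ) * Complex.exp (Complex.I * μ * s)) :=
      funext fun s => hdy s y
    rw [hfun2, hdy x y,
      ((hasDerivAt_const x (0 : ℂ)).prodMk
        (((hd_exp' (Complex.I * (μ : ℂ)) x).const_mul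
            ((-(Real.sin (Real.sqrt (μ ^ 2 + 1) * y)) : ℝ) : ℂ)).prodMk
          ((hd_exp' (Complex.I * (μ : ℂ)) x).const_mul
            (((Real.cos (Real.sqrt (μ ^ 2 + 1) * y)) : ℝ) : ℂ)))).deriv]
    simp only [Prod.smul_mk, Prod.mk.injEq, smul_eq_mul, mul_zero]
    refine ⟨trivial, by ring, by ring⟩
  · -- f_yy
    have hfun3 : (fun y' => deriv (fun y'' => f x y'') y') =
        fun v => ((0 : ℂ),
          ((-(Real.sin (Real.sqrt (μ ^ 2 + 1) * v)) : ℝ) : ℂ) * Complex.exp (Complex.I * μ * x),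
          (((Real.cos (Real.sqrt (μ ^ 2 + 1) * v)) : ℝ) : ℂ) * Complex.exp (Complex.I * μ * x)) :=
      funext fun v => hdy x v
    rw [hfun3, hdx x y, hfe x y,
      ((hasDerivAt_const y (0 : ℂ)).prodMk
        (((hd_nsin' (Real.sqrt (μ ^ 2 + 1)) y).mul_const (Complex.exp (Complex.I * μ * x))).prodMk
          ((hd_cos' (Real.sqrt (μ ^ 2 + 1)) y).mul_const
            (Complex.exp (Complex.I * μ * x))))).deriv]
    simp only [Prod.smul_mk, Prod.mk_sub_mk, smul_eq_mul, Prod.mk.injEq]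
    refine ⟨?_, ?_, ?_⟩
    · linear_combination (-(μ : ℂ) * ((lam : ℂ) - μ) * g1' μ lam x) * Complex.I_sq +
        g1' μ lam x * hlm
    · have hc : ((-(Real.sqrt (μ ^ 2 + 1) * Real.cos (Real.sqrt (μ ^ 2 + 1) * y)) : ℝ) : ℂ)
          = -(((Real.sqrt (μ ^ 2 + 1) : ℝ) : ℂ) *
              ((Real.cos (Real.sqrt (μ ^ 2 + 1) * y) : ℝ) : ℂ)) := by push_cast; ring
      rw [hc]
      simp only [g2']
      have hS0 : ((Real.sqrt (μ ^ 2 + 1) : ℝ) : ℂ) ≠ 0 := Complex.ofReal_ne_zero.mpr h0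
      field_simp
      linear_combination (-(μ:ℂ)^2 * ((Real.cos (Real.sqrt (μ ^ 2 + 1) * y) : ℝ) : ℂ)) * Complex.I_sq +
        (-((Real.cos (Real.sqrt (μ ^ 2 + 1) * y) : ℝ) : ℂ)) * hS
    · have hc : ((-(Real.sqrt (μ ^ 2 + 1) * Real.sin (Real.sqrt (μ ^ 2 + 1) * y)) : ℝ) : ℂ)
          = -(((Real.sqrt (μ ^ 2 + 1) : ℝ) : ℂ) *
              ((Real.sin (Real.sqrt (μ ^ 2 + 1) * y) : ℝ) : ℂ)) := by push_cast; ring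
      rw [hc]
      simp only [g3']
      have hS0 : ((Real.sqrt (μ ^ 2 + 1) : ℝ) : ℂ) ≠ 0 := Complex.ofReal_ne_zero.mpr h0
      field_simp
      linear_combination (-(μ:ℂ)^2 * ((Real.sin (Real.sqrt (μ ^ 2 + 1) * y) : ℝ) : ℂ)) * Complex.I_sq +
        (-((Real.sin (Real.sqrt (μ ^ 2 + 1) * y) : ℝ) : ℂ)) * hS
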